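/- Let A be a commutative noetherian ring with only finitely many maximal ideals (a semi-local ring), let J denote its Jacobson radical, and let M be an artinian A-module. Then for each n ≥ 0 the submodule Mₙ = {x ∈ M | a·x = 0 for all a ∈ Jⁿ} has finite length, and M = ⋃ₙ Mₙ; in particular M is the colimit (union) of an ascending chain of finite length submodules. -/

import Mathlib

universe u

open Ideal Submodule

section Aux

variable {A : Type u} [CommRing A]

/-- Over a semilocal commutative ring, the quotient by the Jacobson radical is semisimple. -/
lemma aux_quot_jacobson_semisimple (hsemilocal : {I : Ideal A | I.IsMaximal}.Finite) :
    IsSemisimpleRing (A ⧸ (⊥ : Ideal A).jacobson) := by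
  haveI : Finite {I : Ideal A | I.IsMaximal} := hsemilocal.to_subtype
  letI : ∀ I : {I : Ideal A | I.IsMaximal}, Field (A ⧸ I.1) :=
    fun I => have := Set.mem_setOf.mp I.2; Ideal.Quotient.field I.1
  have hjac : (⊥ : Ideal A).jacobson = ⨅ I : {I : Ideal A | I.IsMaximal}, I.1 := by
    have hset : {J : Ideal A | ⊥ ≤ J ∧ J.IsMaximal} = {I : Ideal A | I.IsMaximal} := by
      ext; simp
    rw [Ideal.jacobson, hset, sInf_eq_iInf']
  let e : A ⧸ (⊥ : Ideal A).jacobson ≃+* ∀ I : {I : Ideal A | I.IsMaximal}, A ⧸ I.1 :=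
    (Ideal.quotEquivOfEq hjac).trans
      (Ideal.quotientInfRingEquivPiQuotient _ fun I J h ↦
        Ideal.isCoprime_iff_sup_eq.mpr <| I.2.coprime_of_ne J.2 <| by rwa [Ne, Subtype.coe_inj])
  exact e.symm.isSemisimpleRing

/-- A module killed by the Jacobson radical of a semilocal ring is semisimple. -/
lemma aux_semisimple_of_torsion (hsemilocal : {I : Ideal A | I.IsMaximal}.Finite)
    (Q : Type u) [AddCommGroup Q] [Module A Q]
    (h : Module.IsTorsionBySet A Q ((⊥ : Ideal A).jacobson : Set A)) :
    IsSemisimpleModule A Q := by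
  letI := h.module
  haveI : IsSemisimpleRing (A ⧸ (⊥ : Ideal A).jacobson) :=
    aux_quot_jacobson_semisimple hsemilocal
  haveI : IsSemisimpleModule (A ⧸ (⊥ : Ideal A).jacobson) Q := inferInstance
  let e : Submodule (A ⧸ (⊥ : Ideal A).jacobson) Q ≃o Submodule A Q :=
    { toFun := fun p =>
        { carrier := p
          add_mem' := fun ha hb => p.add_mem ha hb
          zero_mem' := p.zero_mem
          smul_mem' := fun a x hx => p.smul_mem (Ideal.Quotient.mk _ a) hx }
      invFun := fun p =>
        { carrier := p
          add_mem' := fun ha hb => p.add_mem ha hb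
          zero_mem' := p.zero_mem
          smul_mem' := by rintro ⟨b⟩ x hx; exact p.smul_mem b hx }
      left_inv := fun p => by ext; exact Iff.rfl
      right_inv := fun p => by ext; simp
      map_rel_iff' := by intro p q; rfl }
  haveI := e.complementedLattice
  exact ⟨⟩

/-- An artinian module killed by a power of the Jacobson radical of a noetherian
semilocal ring is noetherian. -/
lemma aux_noetherian_of_torsion_pow [IsNoetherianRing A]
    (hsemilocal : {I : Ideal A | I.IsMaximal}.Finite) :
    ∀ (n : ℕ) (Q : Type u) [AddCommGroup Q] [Module A Q] [IsArtinian A Q],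
      Module.IsTorsionBySet A Q (((⊥ : Ideal A).jacobson ^ n : Ideal A) : Set A) →
      IsNoetherian A Q := by
  intro n
  induction n with
  | zero =>
    intro Q _ _ _ h
    haveI : Subsingleton Q := by
      refine subsingleton_of_forall_eq 0 fun x => ?_
      have := @h x ⟨1, by simp⟩
      simpa using this
    infer_instance
  | succ n ih =>
    intro Q _ _ _ h
    set J : Ideal A := (⊥ : Ideal A).jacobson with hJ
    set P : Submodule A Q := J • ⊤ with hP
    -- The quotient Q ⧸ P is killed by J, hence semisimple; artinian + semisimple ⇒ noetherian.
    have hq : Module.IsTorsionBySet A (Q ⧸ P) (J : Set A) := by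
      rw [Module.isTorsionBySet_quotient_iff]
      exact fun x r hr => Submodule.smul_mem_smul hr Submodule.mem_top
    haveI : IsSemisimpleModule A (Q ⧸ P) := aux_semisimple_of_torsion hsemilocal _ hq
    haveI hnq : IsNoetherian A (Q ⧸ P) :=
      (IsSemisimpleModule.finite_tfae.out 2 1).mp (inferInstance : IsArtinian A (Q ⧸ P))
    -- The submodule P is killed by J ^ n, hence noetherian by induction.
    have hp : Module.IsTorsionBySet A P ((J ^ n : Ideal A) : Set A) := by
      rintro ⟨x, hx⟩ ⟨a, ha⟩
      refine Subtype.ext ?_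
      show a • x = 0
      refine Submodule.smul_induction_on hx ?_ ?_
      · intro r hr m _
        rw [smul_smul]
        exact @h m ⟨a * r, by rw [pow_succ]; exact Ideal.mul_mem_mul ha hr⟩
      · intro y z hy hz
        rw [smul_add, hy, hz, add_zero]
    haveI hnp : IsNoetherian A P := ih P hp
    exact (isNoetherian_iff_submodule_quotient P).mpr ⟨hnp, hnq⟩

end Aux

/-- Over a commutative noetherian semi-local ring `A` with Jacobson radical `J`,
every artinian module `M` is the union of its submodules `Mₙ = {x | Jⁿ • x = 0}`, each of
which has finite length. -/
theorem stmt_15 {A : Type u} [CommRing A] [IsNoetherianRing A]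
    (hsemilocal : {I : Ideal A | I.IsMaximal}.Finite)
    (M : Type u) [AddCommGroup M] [Module A M] [IsArtinian A M] :
    (∀ n : ℕ, IsFiniteLength A
      (Submodule.torsionBySet A M (((⊥ : Ideal A).jacobson ^ n : Ideal A) : Set A))) ∧
    (∀ x : M, ∃ n : ℕ,
      x ∈ Submodule.torsionBySet A M (((⊥ : Ideal A).jacobson ^ n : Ideal A) : Set A)) := by
  constructor
  · intro n
    have hT := Submodule.torsionBySet_isTorsionBySet
      (R := A) (M := M) (((⊥ : Ideal A).jacobson ^ n : Ideal A) : Set A)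
    haveI := aux_noetherian_of_torsion_pow hsemilocal n
      (Submodule.torsionBySet A M (((⊥ : Ideal A).jacobson ^ n : Ideal A) : Set A)) hT
    exact isFiniteLength_iff_isNoetherian_isArtinian.mpr ⟨this, inferInstance⟩
  · intro x
    set J : Ideal A := (⊥ : Ideal A).jacobson with hJ
    set N : Submodule A M := Submodule.span A {x} with hN
    let f : ℕ →o (Submodule A M)ᵒᵈ :=
      ⟨fun n => J ^ n • N, fun m n hmn =>
        Submodule.smul_mono_left (Ideal.pow_le_pow_right hmn)⟩
    obtain ⟨n, hn⟩ := IsArtinian.monotone_stabilizes f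
    have hstab : J ^ n • N = J ^ (n + 1) • N := hn (n + 1) (Nat.le_succ n)
    have hbot : J ^ n • N = ⊥ := by
      have hfg : (J ^ n • N).FG := by
        obtain ⟨s, hs⟩ := IsNoetherian.noetherian (J ^ n)
        refine Submodule.fg_def.mpr ⟨(fun a => a • x) '' (↑s : Set A), ?_, ?_⟩
        · exact Set.Finite.image _ s.finite_toSet
        rw [hN, ← hs]
        show _ = Ideal.span (↑s : Set A) • Submodule.span A ({x} : Set M)
        rw [Submodule.span_smul_span]
        congr 1
        ext y
        simp [eq_comm]
      refine Submodule.eq_bot_of_le_smul_of_le_jacobson_bot J _ hfg ?_ le_rfl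
      have heq : J • (J ^ n • N) = J ^ n • N := by
        rw [← mul_smul, ← pow_succ']
        exact hstab.symm
      exact heq.ge
    refine ⟨n, ?_⟩
    rw [Submodule.mem_torsionBySet_iff]
    rintro ⟨a, ha⟩
    have : a • x ∈ J ^ n • N :=
      Submodule.smul_mem_smul ha (Submodule.mem_span_singleton_self x)
    rwa [hbot, Submodule.mem_bot] at this
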